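/- Let f be an n-variable Boolean function and define h(W,Z) = W ⊕ f(Z) on n+1 variables. Then AI(f) ≤ AI(h) ≤ 1 + AI(f). -/
import Mathlib


abbrev BF (n : ℕ) := (Fin n → ZMod 2) → ZMod 2

/-- Hamming weight of a vector in `F₂ⁿ`. -/
def wtv {n : ℕ} (x : Fin n → ZMod 2) : ℕ :=
  (Finset.univ.filter fun i => x i = 1).card

/-- ANF coefficient `a_α = ⊕_{z ≤ α} f(z)`. -/
def anf {n : ℕ} (f : BF n) (α : Fin n → ZMod 2) : ZMod 2 :=
  ∑ z ∈ Finset.univ.filter (fun z : Fin n → ZMod 2 => ∀ i, z i = 1 → α i = 1), f z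

/-- Algebraic degree: the maximum weight of `α` with nonzero ANF coefficient
(0 for the zero function). -/
def degBF {n : ℕ} (f : BF n) : ℕ :=
  (Finset.univ.filter fun α => anf f α ≠ 0).sup wtv

/-- Algebraic immunity: minimum degree of a nonzero annihilator of `f` or of `1 ⊕ f`. -/
noncomputable def AI {n : ℕ} (f : BF n) : ℕ :=
  sInf {d : ℕ | ∃ g : BF n, g ≠ 0 ∧ degBF g = d ∧
    ((∀ x, g x * f x = 0) ∨ (∀ x, g x * (1 + f x) = 0))}

/-- The (n+1)-variable function h(W,Z) = W ⊕ f(Z). -/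
def addVar {n : ℕ} (f : BF n) : BF (n + 1) :=
  fun u => u 0 + f (fun i => u i.succ)

variable {n : ℕ}

lemma zmod2_cases (w : ZMod 2) : w = 0 ∨ w = 1 := by revert w; decide

-- weight lemmas
lemma wtv_eq_sum (x : Fin n → ZMod 2) : wtv x = ∑ i, if x i = 1 then 1 else 0 := by
  rw [wtv, Finset.card_filter]

lemma wtv_cons (b : ZMod 2) (α : Fin n → ZMod 2) :
    wtv (Fin.cons b α) = (if b = 1 then 1 else 0) + wtv α := by
  rw [wtv_eq_sum, wtv_eq_sum, Fin.sum_univ_succ]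
  simp

-- degree lemmas
lemma degBF_le (g : BF n) (d : ℕ) (h : ∀ α, anf g α ≠ 0 → wtv α ≤ d) : degBF g ≤ d :=
  Finset.sup_le fun α hα => h α (Finset.mem_filter.mp hα).2

lemma le_degBF (g : BF n) (α : Fin n → ZMod 2) (h : anf g α ≠ 0) : wtv α ≤ degBF g :=
  Finset.le_sup (Finset.mem_filter.mpr ⟨Finset.mem_univ _, h⟩)

lemma AI_nonempty (f : BF n) : {d : ℕ | ∃ g : BF n, g ≠ 0 ∧ degBF g = d ∧
    ((∀ x, g x * f x = 0) ∨ (∀ x, g x * (1 + f x) = 0))}.Nonempty := by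
  by_cases hf : f = 0
  · refine ⟨degBF (fun _ => 1), fun _ => 1, ?_, rfl, Or.inl fun x => ?_⟩
    · intro h
      exact one_ne_zero (congrFun h (fun _ => 0))
    · rw [hf]; simp
  · exact ⟨degBF f, f, hf, rfl, Or.inr fun x => by
      have : ∀ a : ZMod 2, a * (1 + a) = 0 := by decide
      exact this (f x)⟩

lemma AI_mem (f : BF n) : ∃ g : BF n, g ≠ 0 ∧ degBF g = AI f ∧
    ((∀ x, g x * f x = 0) ∨ (∀ x, g x * (1 + f x) = 0)) :=
  Nat.sInf_mem (AI_nonempty f)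

lemma AI_le (f : BF n) (g : BF n) (hg : g ≠ 0)
    (h : (∀ x, g x * f x = 0) ∨ (∀ x, g x * (1 + f x) = 0)) : AI f ≤ degBF g :=
  Nat.sInf_le ⟨g, hg, rfl, h⟩

lemma sum_zmod2' (F : ZMod 2 → ZMod 2) : ∑ w, F w = F 0 + F 1 := by
  have : (Finset.univ : Finset (ZMod 2)) = {0, 1} := by decide
  rw [this, Finset.sum_insert (by decide), Finset.sum_singleton]

lemma sum_pi (F : BF (n+1)) :
    ∑ u, F u = (∑ z, F (Fin.cons 0 z)) + ∑ z, F (Fin.cons 1 z) := by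
  rw [← (Fin.consEquiv (fun _ : Fin (n+1) => ZMod 2)).sum_comp F]
  rw [Fintype.sum_prod_type]
  exact sum_zmod2' (fun w => ∑ z, F (Fin.cons w z))

lemma cond_cons (b w : ZMod 2) (z α : Fin n → ZMod 2) :
    (∀ i : Fin (n+1), (Fin.cons b z : Fin (n+1) → ZMod 2) i = 1 →
        (Fin.cons w α : Fin (n+1) → ZMod 2) i = 1) ↔
      ((b = 1 → w = 1) ∧ ∀ i, z i = 1 → α i = 1) := by
  constructor
  · intro h
    refine ⟨fun hb => ?_, fun i hi => ?_⟩
    · simpa using h 0 (by simpa using hb)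
    · simpa using h i.succ (by simpa using hi)
  · rintro ⟨h0, h1⟩ i
    refine Fin.cases ?_ (fun j => ?_) i
    · simpa using h0
    · simpa using h1 j

lemma anf_eq_sum (f : BF n) (α : Fin n → ZMod 2) :
    anf f α = ∑ z, if (∀ i, z i = 1 → α i = 1) then f z else 0 := by
  rw [anf, Finset.sum_filter]

lemma anf_cons_zero (G : BF (n+1)) (α : Fin n → ZMod 2) :
    anf (fun z => G (Fin.cons 0 z)) α = anf G (Fin.cons 0 α) := by
  rw [anf_eq_sum, anf_eq_sum, sum_pi]
  have h1 : ∀ z : Fin n → ZMod 2,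
      (if (∀ i : Fin (n+1), (Fin.cons 0 z : Fin (n+1) → ZMod 2) i = 1 → (Fin.cons 0 α : Fin (n+1) → ZMod 2) i = 1)
        then G (Fin.cons 0 z) else 0)
      = if (∀ i, z i = 1 → α i = 1) then G (Fin.cons 0 z) else 0 := by
    intro z
    by_cases hc : ∀ i, z i = 1 → α i = 1
    · rw [if_pos ((cond_cons 0 0 z α).mpr ⟨fun h => h, hc⟩), if_pos hc]
    · rw [if_neg (fun h => hc ((cond_cons 0 0 z α).mp h).2), if_neg hc]
  have h2 : ∀ z : Fin n → ZMod 2,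
      (if (∀ i : Fin (n+1), (Fin.cons 1 z : Fin (n+1) → ZMod 2) i = 1 → (Fin.cons 0 α : Fin (n+1) → ZMod 2) i = 1)
        then G (Fin.cons 1 z) else 0) = 0 := by
    intro z
    rw [if_neg (fun h => absurd (((cond_cons 1 0 z α).mp h).1 rfl) (by decide))]
  simp only [h1, h2, Finset.sum_const_zero, add_zero]

lemma anf_cons_one (G : BF (n+1)) (α : Fin n → ZMod 2) :
    anf G (Fin.cons 1 α) = anf G (Fin.cons 0 α) + anf (fun z => G (Fin.cons 1 z)) α := by
  rw [← anf_cons_zero, anf_eq_sum, anf_eq_sum (fun z => G (Fin.cons 0 z)), anf_eq_sum,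
    sum_pi]
  have h1 : ∀ (b : ZMod 2) (z : Fin n → ZMod 2),
      (if (∀ i : Fin (n+1), (Fin.cons b z : Fin (n+1) → ZMod 2) i = 1 → (Fin.cons 1 α : Fin (n+1) → ZMod 2) i = 1)
        then G (Fin.cons b z) else 0)
      = if (∀ i, z i = 1 → α i = 1) then G (Fin.cons b z) else 0 := by
    intro b z
    by_cases hc : ∀ i, z i = 1 → α i = 1
    · rw [if_pos ((cond_cons b 1 z α).mpr ⟨fun _ => rfl, hc⟩), if_pos hc]
    · rw [if_neg (fun h => hc ((cond_cons b 1 z α).mp h).2), if_neg hc]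
  simp only [h1]

lemma anf_zero (α : Fin n → ZMod 2) : anf (fun _ => (0 : ZMod 2)) α = 0 := by
  simp [anf]

lemma degBF_cons_zero (G : BF (n+1)) : degBF (fun z => G (Fin.cons 0 z)) ≤ degBF G := by
  refine degBF_le _ _ fun α hα => ?_
  rw [anf_cons_zero] at hα
  have := le_degBF G _ hα
  rw [wtv_cons] at this
  simpa using this

lemma degBF_cons_one (G : BF (n+1)) : degBF (fun z => G (Fin.cons 1 z)) ≤ degBF G := by
  refine degBF_le _ _ fun α hα => ?_
  by_cases h0 : anf G (Fin.cons 0 α) = 0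
  · have h1 : anf G (Fin.cons 1 α) ≠ 0 := by
      rw [anf_cons_one, h0, zero_add]; exact hα
    have := le_degBF G _ h1
    rw [wtv_cons] at this
    omega
  · have := le_degBF G _ h0
    rw [wtv_cons] at this
    simpa using this

lemma exists_cons_ne (G : BF (n+1)) (hG : G ≠ 0) :
    (fun z => G (Fin.cons 0 z)) ≠ (0 : BF n) ∨ (fun z => G (Fin.cons 1 z)) ≠ (0 : BF n) := by
  by_contra h
  push_neg at h
  obtain ⟨h0, h1⟩ := h
  apply hG
  funext u
  have hu : u = Fin.cons (u 0) (Fin.tail u) := (Fin.cons_self_tail u).symm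
  rcases zmod2_cases (u 0) with hw | hw
  · rw [hu, hw]; exact congrFun h0 (Fin.tail u)
  · rw [hu, hw]; exact congrFun h1 (Fin.tail u)

lemma addVar_cons (f : BF n) (w : ZMod 2) (z : Fin n → ZMod 2) :
    addVar f (Fin.cons w z) = w + f z := by
  simp [addVar]


/-- AI(f) ≤ AI(W ⊕ f(Z)) ≤ 1 + AI(f). -/
theorem AI_addVar {n : ℕ} (f : BF n) :
    AI f ≤ AI (addVar f) ∧ AI (addVar f) ≤ 1 + AI f := by
  constructor
  · obtain ⟨G, hG0, hGd, hann⟩ := AI_mem (addVar f)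
    rcases hann with hann | hann
    · have h0 : ∀ z, G (Fin.cons 0 z) * f z = 0 := fun z => by
        have := hann (Fin.cons 0 z); rw [addVar_cons] at this; simpa using this
      have h1 : ∀ z, G (Fin.cons 1 z) * (1 + f z) = 0 := fun z => by
        have := hann (Fin.cons 1 z); rw [addVar_cons] at this; exact this
      rcases exists_cons_ne G hG0 with hne | hne
      · exact le_trans (AI_le f _ hne (Or.inl h0)) (hGd ▸ degBF_cons_zero G)
      · exact le_trans (AI_le f _ hne (Or.inr h1)) (hGd ▸ degBF_cons_one G)
    · have h0 : ∀ z, G (Fin.cons 0 z) * (1 + f z) = 0 := fun z => by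
        have := hann (Fin.cons 0 z); rw [addVar_cons] at this; simpa using this
      have h1 : ∀ z, G (Fin.cons 1 z) * f z = 0 := fun z => by
        have := hann (Fin.cons 1 z); rw [addVar_cons] at this
        have e : (1 : ZMod 2) + (1 + f z) = f z := by
          have : (1 : ZMod 2) + 1 = 0 := by decide
          rw [← add_assoc, this, zero_add]
        rwa [e] at this
      rcases exists_cons_ne G hG0 with hne | hne
      · exact le_trans (AI_le f _ hne (Or.inr h0)) (hGd ▸ degBF_cons_zero G)
      · exact le_trans (AI_le f _ hne (Or.inl h1)) (hGd ▸ degBF_cons_one G)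
  · obtain ⟨g, hg0, hgd, hann⟩ := AI_mem f
    rcases hann with hann | hann
    · -- g annihilates f; use G u = (1 + u 0) * g (tail u)
      set G : BF (n+1) := fun u => (1 + u 0) * g (Fin.tail u) with hGdef
      have e0 : (fun z => G (Fin.cons 0 z)) = g := by
        funext z; simp [hGdef]
      have e1 : (fun z => G (Fin.cons 1 z)) = (fun _ => (0 : ZMod 2)) := by
        funext z
        have : (1 : ZMod 2) + 1 = 0 := by decide
        simp [hGdef, this]
      have hG0 : G ≠ 0 := by
        intro h
        apply hg0
        funext z
        have := congrFun h (Fin.cons 0 z)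
        rw [← congrFun e0 z]
        exact this
      have hannG : ∀ u, G u * addVar f u = 0 := by
        intro u
        show (1 + u 0) * g (Fin.tail u) * (u 0 + f (Fin.tail u)) = 0
        rcases zmod2_cases (u 0) with hw | hw
        · rw [hw, add_zero, zero_add, one_mul]
          exact hann (Fin.tail u)
        · rw [hw]
          have e : (1 : ZMod 2) + 1 = 0 := by decide
          rw [e, zero_mul, zero_mul]
      have hdG : degBF G ≤ 1 + AI f := by
        refine degBF_le _ _ fun α hα => ?_
        have hα' : α = Fin.cons (α 0) (Fin.tail α) := (Fin.cons_self_tail α).symm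
        rcases zmod2_cases (α 0) with hw | hw
        · rw [hα', hw, ← anf_cons_zero, e0] at hα
          have := le_degBF g _ hα
          rw [hα', hw, wtv_cons, if_neg (by decide : ¬(0 : ZMod 2) = 1)]
          simp only [hgd] at this
          omega
        · rw [hα', hw, anf_cons_one, ← anf_cons_zero, e0, e1, anf_zero, add_zero] at hα
          have := le_degBF g _ hα
          rw [hα', hw, wtv_cons, if_pos rfl]
          simp only [hgd] at this
          omega
      exact le_trans (AI_le (addVar f) G hG0 (Or.inl hannG)) hdG
    · -- g annihilates 1 + f; use G u = u 0 * g (tail u)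
      set G : BF (n+1) := fun u => u 0 * g (Fin.tail u) with hGdef
      have e0 : (fun z => G (Fin.cons 0 z)) = (fun _ => (0 : ZMod 2)) := by
        funext z; simp [hGdef]
      have e1 : (fun z => G (Fin.cons 1 z)) = g := by
        funext z; simp [hGdef]
      have hG0 : G ≠ 0 := by
        intro h
        apply hg0
        funext z
        have := congrFun h (Fin.cons 1 z)
        rw [← congrFun e1 z]
        exact this
      have hannG : ∀ u, G u * addVar f u = 0 := by
        intro u
        show u 0 * g (Fin.tail u) * (u 0 + f (Fin.tail u)) = 0
        rcases zmod2_cases (u 0) with hw | hw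
        · rw [hw, zero_mul, zero_mul]
        · rw [hw, one_mul]
          exact hann (Fin.tail u)
      have hdG : degBF G ≤ 1 + AI f := by
        refine degBF_le _ _ fun α hα => ?_
        have hα' : α = Fin.cons (α 0) (Fin.tail α) := (Fin.cons_self_tail α).symm
        rcases zmod2_cases (α 0) with hw | hw
        · rw [hα', hw, ← anf_cons_zero, e0, anf_zero] at hα
          exact absurd rfl hα
        · rw [hα', hw, anf_cons_one, ← anf_cons_zero, e0, anf_zero, zero_add, e1] at hα
          have := le_degBF g _ hα
          rw [hα', hw, wtv_cons, if_pos rfl]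
          simp only [hgd] at this
          omega
      exact le_trans (AI_le (addVar f) G hG0 (Or.inl hannG)) hdG
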